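/- For any x, h in a real inner product space and any real p ≥ 2, one has |‖x+h‖^p − ‖x‖^p − p‖x‖^{p−2}⟨x,h⟩| ≤ c_p(‖x‖^{p−2}‖h‖² + ‖h‖^p) for some constant c_p depending only on p. -/

import Mathlib

open Real Set
open scoped RealInnerProductSpace

lemma aux_lip (b : ℝ) (hb : 0 ≤ b) {t : ℝ} (ht0 : 0 ≤ t) (ht4 : t ≤ 4) :
    |t ^ b - 1| ≤ (b + 1) * 4 ^ b * |t - 1| := by
  have h4b : (1:ℝ) ≤ 4 ^ b := by
    calc (1:ℝ) = 4 ^ (0:ℝ) := by rw [Real.rpow_zero]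
    _ ≤ 4 ^ b := Real.rpow_le_rpow_of_exponent_le (by norm_num) hb
  rcases le_or_gt 1 t with h1t | ht1
  · rcases eq_or_lt_of_le h1t with h | h
    · simp [← h]
    · obtain ⟨c, hc, hceq⟩ := exists_hasDerivAt_eq_slope (fun s => s ^ b)
        (fun s => b * s ^ (b - 1)) h
        ((continuousOn_id.rpow_const (fun x _ => Or.inr hb)))
        (fun x hx => Real.hasDerivAt_rpow_const (Or.inl (ne_of_gt (lt_trans one_pos hx.1))))
      rw [Real.one_rpow] at hceq
      have ht1' : t - 1 ≠ 0 := by linarith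
      have h01 : t ^ b - 1 = b * c ^ (b-1) * (t - 1) := by
        field_simp at hceq; linarith
      have hcb : c ^ (b - 1) ≤ 4 ^ b := by
        rcases le_or_gt 1 b with hb1 | hb1
        · calc c ^ (b-1) ≤ 4 ^ (b-1) :=
                Real.rpow_le_rpow (by linarith [hc.1]) (by linarith [hc.2]) (by linarith)
          _ ≤ 4 ^ b := Real.rpow_le_rpow_of_exponent_le (by norm_num) (by linarith)
        · calc c ^ (b-1) ≤ 1 :=
                Real.rpow_le_one_of_one_le_of_nonpos hc.1.le (by linarith)
          _ ≤ 4 ^ b := h4b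
      have hc0 : 0 ≤ c ^ (b-1) := Real.rpow_nonneg (by linarith [hc.1]) _
      rw [h01, abs_mul]
      apply mul_le_mul_of_nonneg_right _ (abs_nonneg _)
      rw [abs_of_nonneg (by positivity)]
      calc b * c ^ (b-1) ≤ b * 4 ^ b := mul_le_mul_of_nonneg_left hcb hb
      _ ≤ (b+1) * 4 ^ b := by nlinarith
  · rcases le_or_gt 1 b with hb1 | hb1
    · obtain ⟨c, hc, hceq⟩ := exists_hasDerivAt_eq_slope (fun s => s ^ b)
        (fun s => b * s ^ (b - 1)) ht1
        ((continuousOn_id.rpow_const (fun x _ => Or.inr hb)))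
        (fun x _ => Real.hasDerivAt_rpow_const (Or.inr hb1))
      rw [Real.one_rpow] at hceq
      have ht1' : (1:ℝ) - t ≠ 0 := by linarith
      have h01 : 1 - t ^ b = b * c ^ (b-1) * (1 - t) := by
        have : (1:ℝ) - t > 0 := by linarith
        field_simp at hceq; nlinarith [hceq]
      have hc0 : (0:ℝ) ≤ c := le_trans ht0 hc.1.le
      have hcb : c ^ (b - 1) ≤ 1 := Real.rpow_le_one hc0 hc.2.le (by linarith)
      have hc0' : 0 ≤ c ^ (b-1) := Real.rpow_nonneg hc0 _
      have habs : |t ^ b - 1| = 1 - t ^ b := by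
        rw [abs_sub_comm, abs_of_nonneg]
        have : t ^ b ≤ 1 := Real.rpow_le_one ht0 ht1.le hb
        linarith
      rw [habs, h01, abs_sub_comm, abs_of_nonneg (by linarith : (0:ℝ) ≤ 1 - t)]
      have : b * c ^ (b-1) ≤ (b+1) * 4 ^ b := by nlinarith
      nlinarith
    · rcases eq_or_lt_of_le hb with hb0 | hb0
      · simp [← hb0]
      rcases eq_or_lt_of_le ht0 with ht0' | ht0'
      · rw [← ht0', Real.zero_rpow (ne_of_gt hb0)]
        rw [abs_of_nonpos (by norm_num)]
        have hk : (1:ℝ) ≤ (b+1) * 4 ^ b := by nlinarith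
        nlinarith
      · have h1 : t ≤ t ^ b := by
          calc t = t ^ (1:ℝ) := (Real.rpow_one t).symm
          _ ≤ t ^ b := Real.rpow_le_rpow_of_exponent_ge ht0' ht1.le hb1.le
        have h2 : t ^ b ≤ 1 := Real.rpow_le_one ht0 ht1.le hb
        rw [abs_sub_comm, abs_of_nonneg (by linarith), abs_sub_comm,
          abs_of_nonneg (by linarith : (0:ℝ) ≤ 1 - t)]
        have hk : (1:ℝ) ≤ (b+1) * 4 ^ b := by nlinarith
        nlinarith [mul_le_mul_of_nonneg_right hk (by linarith : (0:ℝ) ≤ 1 - t)]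

lemma aux_g (q : ℝ) (hq : 1 ≤ q) {r : ℝ} (hr0 : 0 ≤ r) (hr4 : r ≤ 4) :
    |r ^ q - 1 - q * (r - 1)| ≤ q * (q * 4 ^ (q-1)) * (r - 1) ^ 2 := by
  have hG : ∀ x : ℝ, HasDerivAt (fun s => s ^ q - 1 - q * (s - 1))
      (q * x ^ (q-1) - q) x := by
    intro x
    have h1 := Real.hasDerivAt_rpow_const (x := x) (Or.inr hq)
    have h2 : HasDerivAt (fun s : ℝ => q * (s - 1)) q x := by
      simpa using ((hasDerivAt_id x).sub_const 1).const_mul q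
    exact (h1.sub_const 1).sub h2
  rcases lt_trichotomy r 1 with h | h | h
  · obtain ⟨c, hc, hceq⟩ := exists_hasDerivAt_eq_slope _ _ h
      (fun x _ => (hG x).continuousAt.continuousWithinAt) (fun x _ => hG x)
    simp only [Real.one_rpow] at hceq
    have hr1 : (1:ℝ) - r ≠ 0 := by linarith
    have h01 : -(r ^ q - 1 - q * (r - 1)) = (q * c ^ (q-1) - q) * (1 - r) := by
      field_simp at hceq; nlinarith [hceq]
    have hlc := aux_lip (q-1) (by linarith) (le_trans hr0 hc.1.le) (by linarith [hc.2])
    have hcr : |c - 1| ≤ |r - 1| := by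
      rw [abs_sub_comm c 1, abs_sub_comm r 1,
        abs_of_nonneg (by linarith [hc.2] : (0:ℝ) ≤ 1 - c),
        abs_of_nonneg (by linarith : (0:ℝ) ≤ 1 - r)]
      linarith [hc.1]
    have key : |q * c ^ (q-1) - q| ≤ q * (q * 4 ^ (q-1)) * |r - 1| := by
      have : q * c ^ (q-1) - q = q * (c ^ (q-1) - 1) := by ring
      rw [this, abs_mul, abs_of_nonneg (by linarith : (0:ℝ) ≤ q)]
      calc q * |c ^ (q-1) - 1| ≤ q * ((q - 1 + 1) * 4 ^ (q-1) * |c - 1|) :=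
            mul_le_mul_of_nonneg_left hlc (by linarith)
      _ ≤ q * ((q - 1 + 1) * 4 ^ (q-1) * |r - 1|) := by
            have h4 : (0:ℝ) < 4 ^ (q-1) := Real.rpow_pos_of_pos (by norm_num) _
            exact mul_le_mul_of_nonneg_left
              (mul_le_mul_of_nonneg_left hcr (mul_nonneg (by linarith) h4.le)) (by linarith)
      _ = q * (q * 4 ^ (q-1)) * |r - 1| := by ring
    calc |r ^ q - 1 - q * (r - 1)| = |q * c ^ (q-1) - q| * |1 - r| := by
          rw [← abs_neg, h01, abs_mul]
    _ ≤ q * (q * 4 ^ (q-1)) * |r - 1| * |1 - r| := by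
          apply mul_le_mul_of_nonneg_right key (abs_nonneg _)
    _ = q * (q * 4 ^ (q-1)) * (r - 1) ^ 2 := by
          have habs : |r-1| * |1-r| = (r-1)^2 := by
            rw [abs_sub_comm 1 r, ← abs_mul, ← sq, abs_of_nonneg (sq_nonneg _)]
          rw [mul_assoc, habs]
  · subst h; simp
  · obtain ⟨c, hc, hceq⟩ := exists_hasDerivAt_eq_slope _ _ h
      (fun x _ => (hG x).continuousAt.continuousWithinAt) (fun x _ => hG x)
    simp only [Real.one_rpow] at hceq
    have hr1 : r - 1 ≠ 0 := by linarith
    have h01 : r ^ q - 1 - q * (r - 1) = (q * c ^ (q-1) - q) * (r - 1) := by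
      field_simp at hceq; nlinarith [hceq]
    have hlc := aux_lip (q-1) (by linarith) (by linarith [hc.1] : (0:ℝ) ≤ c) (by linarith [hc.2])
    have hcr : |c - 1| ≤ |r - 1| := by
      rw [abs_of_nonneg (by linarith [hc.1] : (0:ℝ) ≤ c - 1),
        abs_of_nonneg (by linarith : (0:ℝ) ≤ r - 1)]
      linarith [hc.2]
    have key : |q * c ^ (q-1) - q| ≤ q * (q * 4 ^ (q-1)) * |r - 1| := by
      have : q * c ^ (q-1) - q = q * (c ^ (q-1) - 1) := by ring
      rw [this, abs_mul, abs_of_nonneg (by linarith : (0:ℝ) ≤ q)]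
      calc q * |c ^ (q-1) - 1| ≤ q * ((q - 1 + 1) * 4 ^ (q-1) * |c - 1|) :=
            mul_le_mul_of_nonneg_left hlc (by linarith)
      _ ≤ q * ((q - 1 + 1) * 4 ^ (q-1) * |r - 1|) := by
            have h4 : (0:ℝ) < 4 ^ (q-1) := Real.rpow_pos_of_pos (by norm_num) _
            exact mul_le_mul_of_nonneg_left
              (mul_le_mul_of_nonneg_left hcr (mul_nonneg (by linarith) h4.le)) (by linarith)
      _ = q * (q * 4 ^ (q-1)) * |r - 1| := by ring
    calc |r ^ q - 1 - q * (r - 1)| = |q * c ^ (q-1) - q| * |r - 1| := by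
          rw [h01, abs_mul]
    _ ≤ q * (q * 4 ^ (q-1)) * |r - 1| * |r - 1| := by
          apply mul_le_mul_of_nonneg_right key (abs_nonneg _)
    _ = q * (q * 4 ^ (q-1)) * (r - 1) ^ 2 := by
          rw [mul_assoc, ← abs_mul, ← sq, abs_of_nonneg (sq_nonneg _), mul_assoc]

lemma aux_scalar (q : ℝ) (hq : 1 ≤ q) {a s : ℝ} (ha : 0 < a) (hs0 : 0 ≤ s)
    (hs4 : s ≤ 4 * a) :
    |s ^ q - a ^ q - q * a ^ (q-1) * (s - a)| ≤
      q * (q * 4 ^ (q-1)) * (a ^ (q-2) * (s - a) ^ 2) := by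
  set r := s / a with hr
  have hr0 : 0 ≤ r := div_nonneg hs0 ha.le
  have hr4 : r ≤ 4 := by rw [hr, div_le_iff₀ ha]; linarith
  have hsa : s = a * r := by rw [hr]; field_simp
  have haq : (0:ℝ) < a ^ q := Real.rpow_pos_of_pos ha _
  have e1 : s ^ q = a ^ q * r ^ q := by rw [hsa, Real.mul_rpow ha.le hr0]
  have e2 : a ^ (q-1) * a = a ^ q := by
    rw [← Real.rpow_add_one (ne_of_gt ha)]; ring_nf
  have e3 : a ^ (q-2) * a ^ (2:ℕ) = a ^ q := by
    rw [← Real.rpow_natCast a 2, ← Real.rpow_add ha]; norm_num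
  have key := aux_g q hq hr0 hr4
  have hmul := mul_le_mul_of_nonneg_left key haq.le
  have lhs_eq : s ^ q - a ^ q - q * a ^ (q-1) * (s - a) =
      a ^ q * (r ^ q - 1 - q * (r - 1)) := by
    rw [e1, hsa]
    have : q * a ^ (q-1) * (a * r - a) = a ^ q * (q * (r - 1)) := by
      rw [← e2]; ring
    rw [this]; ring
  have rhs_eq : a ^ q * (q * (q * 4 ^ (q-1)) * (r - 1) ^ 2) =
      q * (q * 4 ^ (q-1)) * (a ^ (q-2) * (s - a) ^ 2) := by
    rw [hsa]
    have h2 : (a * r - a) ^ 2 = a ^ (2:ℕ) * (r - 1) ^ 2 := by ring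
    rw [h2, ← mul_assoc (a ^ (q-2)), e3]; ring
  rw [lhs_eq, abs_mul, abs_of_nonneg haq.le, ← rhs_eq]
  exact mul_le_mul_of_nonneg_left key haq.le

set_option maxHeartbeats 2000000 in
theorem stmt4 {H : Type*} [NormedAddCommGroup H] [InnerProductSpace ℝ H] (p : ℝ) (hp : 2 ≤ p) :
    ∃ c : ℝ, 0 < c ∧ ∀ x h : H,
      |‖x + h‖ ^ p - ‖x‖ ^ p - p * ‖x‖ ^ (p - 2) * ⟪x, h⟫| ≤
        c * (‖x‖ ^ (p - 2) * ‖h‖ ^ 2 + ‖h‖ ^ p) := by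
  obtain ⟨q, hqdef⟩ : ∃ q : ℝ, q = p / 2 := ⟨_, rfl⟩
  have hq : 1 ≤ q := by rw [hqdef]; linarith
  obtain ⟨K, hKdef⟩ : ∃ K : ℝ, K = q * (q * 4 ^ (q - 1)) := ⟨_, rfl⟩
  have hK : 0 ≤ K := by
    have : (0:ℝ) < 4 ^ (q-1) := Real.rpow_pos_of_pos (by norm_num) _
    rw [hKdef]; positivity
  have h3p : (0:ℝ) < 3 ^ p := Real.rpow_pos_of_pos (by norm_num) _
  have h2p : (0:ℝ) < 2 ^ p := Real.rpow_pos_of_pos (by norm_num) _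
  obtain ⟨c, hcdef⟩ : ∃ c : ℝ, c = 3 ^ p + 2 ^ p + p * 2 ^ p + 9 * K + q + 1 := ⟨_, rfl⟩
  have hc0 : 0 < c := by rw [hcdef]; nlinarith
  refine ⟨c, hc0, ?_⟩
  intro x h
  have hT1 : 0 ≤ ‖x‖ ^ (p - 2) * ‖h‖ ^ 2 := by positivity
  have hT2 : 0 ≤ ‖h‖ ^ p := Real.rpow_nonneg (norm_nonneg _) _
  rcases le_or_gt ‖x‖ (2 * ‖h‖) with hcase | hcase
  · -- small x case
    rcases eq_or_ne x 0 with rfl | hx0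
    · simp only [zero_add, norm_zero, inner_zero_left, mul_zero, sub_zero]
      rw [Real.zero_rpow (by linarith : p ≠ 0)]
      rw [sub_zero, abs_of_nonneg hT2]
      have h0 : 0 ≤ (0:ℝ) ^ (p-2) * ‖h‖ ^ 2 := by positivity
      have hc1 : (1:ℝ) ≤ c := by rw [hcdef]; nlinarith
      nlinarith [mul_le_mul_of_nonneg_right hc1 hT2, mul_nonneg hc0.le h0]
    · have hx : 0 < ‖x‖ := norm_pos_iff.mpr hx0
      have hh : 0 < ‖h‖ := by nlinarith
      have hp0 : 0 ≤ p := by linarith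
      have b1 : ‖x + h‖ ^ p ≤ 3 ^ p * ‖h‖ ^ p := by
        calc ‖x + h‖ ^ p ≤ (3 * ‖h‖) ^ p := by
              apply Real.rpow_le_rpow (norm_nonneg _) _ hp0
              calc ‖x + h‖ ≤ ‖x‖ + ‖h‖ := norm_add_le x h
              _ ≤ 3 * ‖h‖ := by linarith
        _ = 3 ^ p * ‖h‖ ^ p := Real.mul_rpow (by norm_num) (norm_nonneg _)
      have b2 : ‖x‖ ^ p ≤ 2 ^ p * ‖h‖ ^ p := by
        calc ‖x‖ ^ p ≤ (2 * ‖h‖) ^ p :=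
              Real.rpow_le_rpow (norm_nonneg _) hcase hp0
        _ = 2 ^ p * ‖h‖ ^ p := Real.mul_rpow (by norm_num) (norm_nonneg _)
      have b3 : |p * ‖x‖ ^ (p - 2) * ⟪x, h⟫| ≤ p * 2 ^ p * ‖h‖ ^ p := by
        have hin : |⟪x, h⟫| ≤ ‖x‖ * ‖h‖ := abs_real_inner_le_norm x h
        have hxp : 0 ≤ ‖x‖ ^ (p-2) := Real.rpow_nonneg (norm_nonneg _) _
        rw [abs_mul, abs_mul, abs_of_nonneg hp0, abs_of_nonneg hxp]
        calc p * ‖x‖ ^ (p-2) * |⟪x, h⟫| ≤ p * ‖x‖ ^ (p-2) * (‖x‖ * ‖h‖) := by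
              apply mul_le_mul_of_nonneg_left hin (by positivity)
        _ = p * (‖x‖ ^ (p-2) * ‖x‖) * ‖h‖ := by ring
        _ = p * ‖x‖ ^ (p-1) * ‖h‖ := by
              rw [← Real.rpow_add_one (ne_of_gt hx)]; ring_nf
        _ ≤ p * (2 ^ (p-1) * ‖h‖ ^ (p-1)) * ‖h‖ := by
              apply mul_le_mul_of_nonneg_right _ (norm_nonneg _)
              apply mul_le_mul_of_nonneg_left _ hp0
              calc ‖x‖ ^ (p-1) ≤ (2 * ‖h‖) ^ (p-1) :=
                    Real.rpow_le_rpow (norm_nonneg _) hcase (by linarith)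
              _ = 2 ^ (p-1) * ‖h‖ ^ (p-1) := Real.mul_rpow (by norm_num) (norm_nonneg _)
        _ = p * 2 ^ (p-1) * (‖h‖ ^ (p-1) * ‖h‖) := by ring
        _ = p * 2 ^ (p-1) * ‖h‖ ^ p := by
              rw [← Real.rpow_add_one (ne_of_gt hh)]; ring_nf
        _ ≤ p * 2 ^ p * ‖h‖ ^ p := by
              have : (2:ℝ) ^ (p-1) ≤ 2 ^ p :=
                Real.rpow_le_rpow_of_exponent_le (by norm_num) (by linarith)
              have := mul_le_mul_of_nonneg_left this hp0
              nlinarith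
      have hA : 0 ≤ ‖x + h‖ ^ p := Real.rpow_nonneg (norm_nonneg _) _
      have hB : 0 ≤ ‖x‖ ^ p := Real.rpow_nonneg (norm_nonneg _) _
      have hbd : |‖x + h‖ ^ p - ‖x‖ ^ p - p * ‖x‖ ^ (p - 2) * ⟪x, h⟫| ≤
          (3 ^ p + 2 ^ p + p * 2 ^ p) * ‖h‖ ^ p := by
        rw [abs_le]
        constructor <;> nlinarith [le_abs_self (p * ‖x‖ ^ (p - 2) * ⟪x, h⟫),
          neg_abs_le (p * ‖x‖ ^ (p - 2) * ⟪x, h⟫)]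
      calc |‖x + h‖ ^ p - ‖x‖ ^ p - p * ‖x‖ ^ (p - 2) * ⟪x, h⟫| ≤
            (3 ^ p + 2 ^ p + p * 2 ^ p) * ‖h‖ ^ p := hbd
      _ ≤ c * (‖x‖ ^ (p - 2) * ‖h‖ ^ 2 + ‖h‖ ^ p) := by
            have hcc : 3 ^ p + 2 ^ p + p * 2 ^ p ≤ c := by rw [hcdef]; nlinarith
            nlinarith [mul_le_mul_of_nonneg_right hcc hT2]
  · -- large x case
    have hx : 0 < ‖x‖ := by nlinarith [norm_nonneg h]
    have hh0 : 0 ≤ ‖h‖ := norm_nonneg h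
    have ha : 0 < (‖x‖:ℝ) ^ 2 := by positivity
    have hs0 : 0 ≤ (‖x + h‖:ℝ) ^ 2 := by positivity
    have hsa : (‖x + h‖:ℝ) ^ 2 - ‖x‖ ^ 2 = 2 * ⟪x, h⟫ + ‖h‖ ^ 2 := by
      rw [norm_add_sq_real]; ring
    have hin : |⟪x, h⟫| ≤ ‖x‖ * ‖h‖ := abs_real_inner_le_norm x h
    have hu : |(‖x + h‖:ℝ) ^ 2 - ‖x‖ ^ 2| ≤ 3 * ‖x‖ * ‖h‖ := by
      rw [hsa, abs_le]
      have h1 := le_abs_self (⟪x, h⟫ : ℝ)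
      have h2 := neg_abs_le (⟪x, h⟫ : ℝ)
      have h3 : ‖h‖ * ‖h‖ ≤ ‖x‖ * ‖h‖ :=
        mul_le_mul_of_nonneg_right (by linarith) hh0
      constructor <;> nlinarith
    have hs4 : (‖x + h‖:ℝ) ^ 2 ≤ 4 * (‖x‖ ^ 2) := by
      have h1 := (abs_le.1 hu).2
      nlinarith
    have key := aux_scalar q hq ha hs0 hs4
    -- exponent conversions
    have epow : ∀ v : H, ‖v‖ ^ p = (‖v‖ ^ 2 : ℝ) ^ q := by
      intro v
      rw [← Real.rpow_natCast ‖v‖ 2, ← Real.rpow_mul (norm_nonneg v)]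
      congr 1
      push_cast
      rw [hqdef]; ring
    have e2 : ‖x‖ ^ (p - 2) = ((‖x‖:ℝ) ^ 2) ^ (q - 1) := by
      rw [← Real.rpow_natCast ‖x‖ 2, ← Real.rpow_mul (norm_nonneg x)]
      congr 1
      push_cast
      rw [hqdef]; ring
    have e3 : ((‖x‖:ℝ) ^ 2) ^ (q - 2) = ‖x‖ ^ (p - 4) := by
      rw [← Real.rpow_natCast ‖x‖ 2, ← Real.rpow_mul (norm_nonneg x)]
      congr 1
      push_cast
      rw [hqdef]; ring
    have e4 : ‖x‖ ^ (p - 4) * ‖x‖ ^ (2:ℕ) = ‖x‖ ^ (p - 2) := by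
      rw [← Real.rpow_natCast ‖x‖ 2, ← Real.rpow_add hx]
      congr 1
      push_cast
      ring
    rw [epow (x + h), epow x, e2]
    have hdecomp : ((‖x + h‖:ℝ) ^ 2) ^ q - ((‖x‖:ℝ) ^ 2) ^ q - p * ((‖x‖:ℝ) ^ 2) ^ (q - 1) * ⟪x, h⟫ =
        (((‖x + h‖:ℝ) ^ 2) ^ q - ((‖x‖:ℝ) ^ 2) ^ q - q * ((‖x‖:ℝ) ^ 2) ^ (q - 1) * ((‖x + h‖:ℝ) ^ 2 - ‖x‖ ^ 2)) + q * ((‖x‖:ℝ) ^ 2) ^ (q - 1) * ‖h‖ ^ 2 := by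
      rw [hsa, hqdef]; ring
    have haq1 : 0 ≤ ((‖x‖:ℝ) ^ 2) ^ (q - 1) := Real.rpow_nonneg ha.le _
    have hD : |((‖x + h‖:ℝ) ^ 2) ^ q - ((‖x‖:ℝ) ^ 2) ^ q - q * ((‖x‖:ℝ) ^ 2) ^ (q - 1) * ((‖x + h‖:ℝ) ^ 2 - ‖x‖ ^ 2)| ≤ 9 * K * (((‖x‖:ℝ) ^ 2) ^ (q - 1) * ‖h‖ ^ 2) := by
      calc |((‖x + h‖:ℝ) ^ 2) ^ q - ((‖x‖:ℝ) ^ 2) ^ q - q * ((‖x‖:ℝ) ^ 2) ^ (q - 1) * ((‖x + h‖:ℝ) ^ 2 - ‖x‖ ^ 2)| ≤ K * (((‖x‖:ℝ) ^ 2) ^ (q - 2) * ((‖x + h‖:ℝ) ^ 2 - ‖x‖ ^ 2) ^ 2) := by rw [hKdef]; exact key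
      _ ≤ K * (((‖x‖:ℝ) ^ 2) ^ (q - 2) * (9 * (‖x‖ ^ 2 * ‖h‖ ^ 2))) := by
            apply mul_le_mul_of_nonneg_left _ hK
            apply mul_le_mul_of_nonneg_left _ (Real.rpow_nonneg ha.le _)
            calc ((‖x + h‖:ℝ) ^ 2 - ‖x‖ ^ 2) ^ 2 = |(‖x + h‖:ℝ) ^ 2 - ‖x‖ ^ 2| ^ 2 := (sq_abs _).symm
            _ ≤ (3 * ‖x‖ * ‖h‖) ^ 2 := by
                  apply pow_le_pow_left₀ (abs_nonneg _) hu
            _ = 9 * (‖x‖ ^ 2 * ‖h‖ ^ 2) := by ring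
      _ = 9 * K * ((‖x‖ ^ (p-4) * ‖x‖ ^ (2:ℕ)) * ‖h‖ ^ 2) := by rw [e3]; ring
      _ = 9 * K * (((‖x‖:ℝ) ^ 2) ^ (q - 1) * ‖h‖ ^ 2) := by rw [e4, e2]
    calc |((‖x + h‖:ℝ) ^ 2) ^ q - ((‖x‖:ℝ) ^ 2) ^ q - p * ((‖x‖:ℝ) ^ 2) ^ (q - 1) * ⟪x, h⟫| ≤
          |((‖x + h‖:ℝ) ^ 2) ^ q - ((‖x‖:ℝ) ^ 2) ^ q - q * ((‖x‖:ℝ) ^ 2) ^ (q - 1) * ((‖x + h‖:ℝ) ^ 2 - ‖x‖ ^ 2)| + |q * ((‖x‖:ℝ) ^ 2) ^ (q - 1) * ‖h‖ ^ 2| := by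
          rw [hdecomp]; exact abs_add_le _ _
    _ ≤ 9 * K * (((‖x‖:ℝ) ^ 2) ^ (q - 1) * ‖h‖ ^ 2) + q * (((‖x‖:ℝ) ^ 2) ^ (q - 1) * ‖h‖ ^ 2) := by
          have : |q * ((‖x‖:ℝ) ^ 2) ^ (q - 1) * ‖h‖ ^ 2| = q * (((‖x‖:ℝ) ^ 2) ^ (q - 1) * ‖h‖ ^ 2) := by
            rw [abs_of_nonneg (by positivity)]; ring
          rw [this]
          exact add_le_add_left hD _
    _ ≤ c * (((‖x‖:ℝ) ^ 2) ^ (q - 1) * ‖h‖ ^ 2 + ‖h‖ ^ p) := by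
          have hT1' : 0 ≤ ((‖x‖:ℝ) ^ 2) ^ (q - 1) * ‖h‖ ^ 2 := by positivity
          have hcc : 9 * K + q ≤ c := by rw [hcdef]; nlinarith
          nlinarith [mul_le_mul_of_nonneg_right hcc hT1']
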